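/- Suppose W : ℝ → ℝ is bounded, piecewise C², satisfies boundary conditions lim_{ξ→-∞} W(ξ) = A, lim_{ξ→+∞} W(ξ) = B, and the equation (W-c)²/2 + K∗W = α holds on ℝ∖{0} for constants c, α ∈ ℝ, with K(x) = (1/2)e^{-|x|}. Then (A-c)²/2 + A = α = (B-c)²/2 + B; consequently either A = B or c = 1 + (A+B)/2. -/

import Mathlib

open MeasureTheory Real Filter

lemma exp_neg_abs_integrable : Integrable (fun x : ℝ => Real.exp (-|x|)) := by
  have h1 : IntegrableOn (fun x : ℝ => Real.exp (-|x|)) (Set.Ioi 0) := by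
    refine ((exp_neg_integrableOn_Ioi 0 one_pos).congr_fun ?_ measurableSet_Ioi)
    intro x hx
    simp [abs_of_pos (Set.mem_Ioi.mp hx)]
  have h2 : IntegrableOn (fun x : ℝ => Real.exp (-|x|)) (Set.Iic 0) := by
    refine ((integrableOn_exp_Iic 0).congr_fun ?_ measurableSet_Iic)
    intro x hx
    simp [abs_of_nonpos (show x ≤ (0:ℝ) from hx)]
  have := h2.union h1
  rw [Set.Iic_union_Ioi] at this
  exact integrableOn_univ.mp this

lemma exp_neg_abs_integral : (∫ x : ℝ, Real.exp (-|x|)) = 2 := by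
  rw [integral_comp_abs (f := fun x => Real.exp (-x)), integral_exp_neg_Ioi_zero]
  norm_num

lemma conv_lim (W : ℝ → ℝ) (hWmeas : Measurable W) {C : ℝ} (hC : ∀ x, |W x| ≤ C)
    {L : ℝ} {l : Filter ℝ} [l.IsCountablyGenerated]
    (hl : ∀ u : ℝ, Tendsto (fun ξ : ℝ => ξ - u) l l) (hW : Tendsto W l (nhds L)) :
    Tendsto (fun ξ => ∫ u : ℝ, (1 / 2) * Real.exp (-|u|) * W (ξ - u)) l (nhds L) := by
  have hC0 : 0 ≤ C := le_trans (abs_nonneg _) (hC 0)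
  have hKint : Integrable (fun u : ℝ => (1 / 2) * Real.exp (-|u|)) :=
    exp_neg_abs_integrable.const_mul _
  have h := tendsto_integral_filter_of_dominated_convergence
    (μ := volume) (l := l) (F := fun ξ u => (1 / 2) * Real.exp (-|u|) * W (ξ - u))
    (f := fun u => (1 / 2) * Real.exp (-|u|) * L)
    (bound := fun u => C * ((1 / 2) * Real.exp (-|u|)))
    ?_ ?_ (hKint.const_mul C) ?_
  · have hval : (∫ u : ℝ, (1 / 2) * Real.exp (-|u|) * L) = L := by
      rw [integral_mul_const, integral_const_mul, exp_neg_abs_integral]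
      ring
    rwa [hval] at h
  · refine Eventually.of_forall (fun ξ => ?_)
    exact (((measurable_const.mul ((measurable_id.abs.neg).exp)).mul
      (hWmeas.comp (measurable_const.sub measurable_id))).aestronglyMeasurable)
  · refine Eventually.of_forall (fun ξ => ae_of_all _ (fun u => ?_))
    have h1 : (0:ℝ) ≤ (1 / 2) * Real.exp (-|u|) := by positivity
    rw [Real.norm_eq_abs, abs_mul, abs_of_nonneg h1]
    rw [mul_comm C]
    exact mul_le_mul_of_nonneg_left (hC _) h1
  · refine ae_of_all _ (fun u => ?_)
    exact tendsto_const_nhds.mul (hW.comp (hl u))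

/-- Suppose `W : ℝ → ℝ` is bounded and measurable with `W(ξ) → A` as `ξ → -∞` and
`W(ξ) → B` as `ξ → +∞`, and `(W-c)²/2 + K∗W = α` holds on `ℝ∖{0}`, where
`K(x) = (1/2)e^{-|x|}`. Then `(A-c)²/2 + A = α = (B-c)²/2 + B`; consequently
either `A = B` or `c = 1 + (A+B)/2`. -/
theorem boundary_values_relation (W K : ℝ → ℝ)
    (hK : ∀ x, K x = (1 / 2) * Real.exp (-|x|))
    (hWmeas : Measurable W) (hWbd : ∃ C, ∀ x, |W x| ≤ C)
    (A B c α : ℝ)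
    (hA : Tendsto W atBot (nhds A)) (hB : Tendsto W atTop (nhds B))
    (heq : ∀ ξ : ℝ, ξ ≠ 0 →
      (W ξ - c) ^ 2 / 2 + (∫ y : ℝ, K (ξ - y) * W y) = α) :
    ((A - c) ^ 2 / 2 + A = α ∧ (B - c) ^ 2 / 2 + B = α) ∧
      (A = B ∨ c = 1 + (A + B) / 2) := by
  obtain ⟨C, hC⟩ := hWbd
  have hconv : ∀ ξ : ℝ, (∫ y : ℝ, K (ξ - y) * W y)
      = ∫ u : ℝ, (1 / 2) * Real.exp (-|u|) * W (ξ - u) := by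
    intro ξ
    rw [← integral_sub_left_eq_self (fun u => (1 / 2) * Real.exp (-|u|) * W (ξ - u)) volume ξ]
    congr 1
    funext y
    rw [hK, sub_sub_cancel]
  have hlimA : Tendsto (fun ξ => (W ξ - c) ^ 2 / 2 + (∫ y : ℝ, K (ξ - y) * W y))
      atBot (nhds ((A - c) ^ 2 / 2 + A)) := by
    refine Tendsto.add (((hA.sub tendsto_const_nhds).pow 2).div_const 2) ?_
    have := conv_lim W hWmeas hC (l := atBot)
      (fun u => tendsto_atBot_add_const_right _ (-u) tendsto_id |>.congr (by intro x; simp [sub_eq_add_neg])) hA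
    exact (this.congr (fun ξ => (hconv ξ).symm))
  have hlimB : Tendsto (fun ξ => (W ξ - c) ^ 2 / 2 + (∫ y : ℝ, K (ξ - y) * W y))
      atTop (nhds ((B - c) ^ 2 / 2 + B)) := by
    refine Tendsto.add (((hB.sub tendsto_const_nhds).pow 2).div_const 2) ?_
    have := conv_lim W hWmeas hC (l := atTop)
      (fun u => tendsto_atTop_add_const_right _ (-u) tendsto_id |>.congr (by intro x; simp [sub_eq_add_neg])) hB
    exact (this.congr (fun ξ => (hconv ξ).symm))
  have hAeq : (A - c) ^ 2 / 2 + A = α := by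
    have hev : (fun ξ => (W ξ - c) ^ 2 / 2 + (∫ y : ℝ, K (ξ - y) * W y)) =ᶠ[atBot]
        (fun _ => α) := by
      filter_upwards [eventually_lt_atBot (0:ℝ)] with ξ hξ
      exact heq ξ (ne_of_lt hξ)
    exact tendsto_nhds_unique (hlimA.congr' hev) tendsto_const_nhds
  have hBeq : (B - c) ^ 2 / 2 + B = α := by
    have hev : (fun ξ => (W ξ - c) ^ 2 / 2 + (∫ y : ℝ, K (ξ - y) * W y)) =ᶠ[atTop]
        (fun _ => α) := by
      filter_upwards [eventually_gt_atTop (0:ℝ)] with ξ hξ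
      exact heq ξ (ne_of_gt hξ)
    exact tendsto_nhds_unique (hlimB.congr' hev) tendsto_const_nhds
  refine ⟨⟨hAeq, hBeq⟩, ?_⟩
  have h0 : (A - B) * (A + B - 2 * c + 2) = 0 := by
    linear_combination 2 * hAeq - 2 * hBeq
  rcases mul_eq_zero.mp h0 with h | h
  · exact Or.inl (sub_eq_zero.mp h)
  · right; linarith
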